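/- Let f : X → ℝ be K-convex and L-Lipschitz with K, L > 0 on a geodesic space, attaining its minimum at p. For any x ∈ X, τ > 1/K, and y ∈ argmin_{z} { f(z) + d²(x,z)/(2τ) }, we have d(x,y) ≥ (1 − 1/(Kτ))·(f(x) − f(p))/L. -/
import Mathlib


open Set

/-- Gromov product `(y|z)_x`. -/
noncomputable def gp {X : Type*} [MetricSpace X] (x y z : X) : ℝ :=
  (dist x y + dist x z - dist y z) / 2

/-- `δ`-hyperbolicity. -/
def IsDeltaHyp (X : Type*) [MetricSpace X] (δ : ℝ) : Prop :=
  ∀ p x y z : X, gp p x z ≥ min (gp p x y) (gp p y z) - δ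

/-- `γ` is a (constant-speed, unit-interval) geodesic from `x` to `y`. -/
def IsGeodesic {X : Type*} [MetricSpace X] (γ : ℝ → X) (x y : X) : Prop :=
  γ 0 = x ∧ γ 1 = y ∧
    ∀ s ∈ Icc (0:ℝ) 1, ∀ t ∈ Icc (0:ℝ) 1, dist (γ s) (γ t) = |s - t| * dist x y

/-- Geodesic space. -/
def GeodesicSpace (X : Type*) [MetricSpace X] : Prop :=
  ∀ x y : X, ∃ γ : ℝ → X, IsGeodesic γ x y

/-- (Weak, geodesic) `K`-convexity. -/
def KConvex {X : Type*} [MetricSpace X] (K : ℝ) (f : X → ℝ) : Prop :=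
  ∀ x y : X, ∃ γ : ℝ → X, IsGeodesic γ x y ∧
    ∀ t ∈ Icc (0:ℝ) 1,
      f (γ t) ≤ (1 - t) * f x + t * f y - K / 2 * (1 - t) * t * dist x y ^ 2

/-- `L`-Lipschitz continuity. -/
def LipschitzL {X : Type*} [MetricSpace X] (L : ℝ) (f : X → ℝ) : Prop :=
  ∀ x y : X, |f x - f y| ≤ L * dist x y

/-- `y` belongs to the proximal set `J^f_τ(x)`. -/
def IsProx {X : Type*} [MetricSpace X] (f : X → ℝ) (τ : ℝ) (x y : X) : Prop :=
  ∀ z : X, f y + dist x y ^ 2 / (2 * τ) ≤ f z + dist x z ^ 2 / (2 * τ)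

theorem prox_step_lower_bound {X : Type*} [MetricSpace X] {K L τ : ℝ}
    (hK : 0 < K) (hL : 0 < L) (hτ : 1 / K < τ)
    (hgeo : GeodesicSpace X) (f : X → ℝ)
    (hconv : KConvex K f) (hlip : LipschitzL L f)
    (p : X) (hp : ∀ z : X, f p ≤ f z)
    (x y : X) (hy : IsProx f τ x y) :
    dist x y ≥ (1 - 1 / (K * τ)) * (f x - f p) / L := by
  obtain ⟨γ, ⟨hγ0, hγ1, hγd⟩, hconvγ⟩ := hconv y p
  have hτ0 : 0 < τ := lt_trans (by positivity) hτ
  have h2τ : (0:ℝ) < 2 * τ := by linarith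
  have hKτ : (1:ℝ) < K * τ := by
    rw [div_lt_iff₀ hK] at hτ; linarith [hτ]
  have hKτ0 : (0:ℝ) < K * τ := by linarith
  have hd0 : 0 ≤ dist x y := dist_nonneg
  have hD0 : 0 ≤ dist y p := dist_nonneg
  -- key inequality for each t ∈ (0,1], denominators cleared
  have key : ∀ t : ℝ, 0 < t → t ≤ 1 →
      (f y - f p) * (2 * τ) ≤ 2 * dist x y * dist y p - K * τ * dist y p ^ 2
        + t * (K * τ * dist y p ^ 2 + dist y p ^ 2) := by
    intro t ht0 ht1
    have htI : t ∈ Icc (0:ℝ) 1 := ⟨le_of_lt ht0, ht1⟩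
    have e1 := hy (γ t)
    have e2 := hconvγ t htI
    have e3 : dist x (γ t) ≤ dist x y + t * dist y p := by
      have h1 : dist y (γ t) = t * dist y p := by
        have := hγd 0 ⟨le_refl 0, zero_le_one⟩ t htI
        rw [hγ0] at this
        rw [this, abs_of_nonpos (by linarith), neg_sub, sub_zero]
      calc dist x (γ t) ≤ dist x y + dist y (γ t) := dist_triangle x y (γ t)
        _ = dist x y + t * dist y p := by rw [h1]
    have e4 : dist x (γ t) ^ 2 ≤ (dist x y + t * dist y p) ^ 2 :=
      pow_le_pow_left₀ dist_nonneg e3 2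
    have e1' : f y * (2 * τ) + dist x y ^ 2 ≤ f (γ t) * (2 * τ) + dist x (γ t) ^ 2 := by
      have h := mul_le_mul_of_nonneg_right e1 h2τ.le
      rw [add_mul, add_mul, div_mul_cancel₀ _ (ne_of_gt h2τ),
        div_mul_cancel₀ _ (ne_of_gt h2τ)] at h
      exact h
    have e2' : f (γ t) * (2 * τ) ≤
        ((1 - t) * f y + t * f p - K / 2 * (1 - t) * t * dist y p ^ 2) * (2 * τ) :=
      mul_le_mul_of_nonneg_right e2 h2τ.le
    have e5 : t * ((f y - f p) * (2 * τ)) ≤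
        t * (2 * dist x y * dist y p - K * τ * dist y p ^ 2
          + t * (K * τ * dist y p ^ 2 + dist y p ^ 2)) := by
      nlinarith [e1', e2', e4, ht0, hτ0]
    exact le_of_mul_le_mul_left e5 ht0
  -- pass to the limit t → 0⁺
  have hA : (f y - f p) * (2 * τ) ≤
      2 * dist x y * dist y p - K * τ * dist y p ^ 2 := by
    apply le_of_forall_pos_le_add
    intro ε hε
    have hC : (0:ℝ) ≤ K * τ * dist y p ^ 2 + dist y p ^ 2 := by positivity
    obtain ⟨t, ht0, ht1, hts⟩ :
        ∃ t : ℝ, 0 < t ∧ t ≤ 1 ∧ t ≤ ε / (K * τ * dist y p ^ 2 + dist y p ^ 2 + 1) :=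
      ⟨min 1 (ε / (K * τ * dist y p ^ 2 + dist y p ^ 2 + 1)),
        lt_min one_pos (by positivity), min_le_left _ _, min_le_right _ _⟩
    have h := key t ht0 ht1
    have htC : t * (K * τ * dist y p ^ 2 + dist y p ^ 2) ≤ ε := by
      have h2 : t * (K * τ * dist y p ^ 2 + dist y p ^ 2) ≤
          (ε / (K * τ * dist y p ^ 2 + dist y p ^ 2 + 1)) *
            (K * τ * dist y p ^ 2 + dist y p ^ 2) :=
        mul_le_mul_of_nonneg_right hts hC
      have h3 : (ε / (K * τ * dist y p ^ 2 + dist y p ^ 2 + 1)) *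
          (K * τ * dist y p ^ 2 + dist y p ^ 2) ≤ ε := by
        rw [div_mul_eq_mul_div, div_le_iff₀ (by linarith)]
        nlinarith
      linarith
    linarith
  -- hence K·τ·(f y − f p)·2τ ≤ d²
  have hA2 : K * τ * ((f y - f p) * (2 * τ)) ≤ dist x y ^ 2 := by
    nlinarith [mul_le_mul_of_nonneg_left hA hKτ0.le,
      sq_nonneg (dist x y - K * τ * dist y p)]
  -- prox at z = x : d² ≤ (f x − f y)·2τ
  have hstep : dist x y ^ 2 ≤ (f x - f y) * (2 * τ) := by
    have h := hy x
    rw [dist_self] at h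
    have h0 : (0:ℝ) ^ 2 / (2 * τ) = 0 := by norm_num
    rw [h0, add_zero] at h
    have h' : dist x y ^ 2 / (2 * τ) ≤ f x - f y := by linarith
    rw [div_le_iff₀ h2τ] at h'
    linarith
  have hfxy : f x - f y ≤ L * dist x y := by
    have h := abs_le.mp (hlip x y)
    linarith [h.2]
  have hpy : f p ≤ f y := hp y
  -- K·τ·(f y − f p) ≤ f x − f p
  have h3 : K * τ * (f y - f p) ≤ f x - f p := by
    have h4 : K * τ * ((f y - f p) * (2 * τ)) ≤ (f x - f y) * (2 * τ) := by
      linarith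
    have h5 : K * τ * (f y - f p) ≤ f x - f y :=
      le_of_mul_le_mul_right (by nlinarith [h4]) h2τ
    linarith
  -- (K·τ − 1)·(f x − f p) ≤ K·τ·L·d
  have h4 : (K * τ - 1) * (f x - f p) ≤ K * τ * (L * dist x y) := by
    have h5 : K * τ * (f x - f y) ≤ K * τ * (L * dist x y) :=
      mul_le_mul_of_nonneg_left hfxy hKτ0.le
    nlinarith [h3, h5]
  -- conclude
  rw [ge_iff_le, div_le_iff₀ hL]
  have heq : (1 - 1 / (K * τ)) * (f x - f p) =
      ((K * τ - 1) * (f x - f p)) / (K * τ) := by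
    field_simp
  rw [heq, div_le_iff₀ hKτ0]
  nlinarith [h4, hL, hd0]
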